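/- The set of global-error-tolerant TO-sequences is characterized by the marked language of the E_gTS-builder: TO_g^{c_u}(τ_g) = {(t^p[0], c) | ∃ t^p ∈ L_m(B̃_g) with h̃_g((τ_g,0), t^p) = (T_e, c)}, where TO_g^{c_u}(τ_g) = {(ω, c) | ∃ ω_r ∈ TO(τ_g) with (ω_r, c) ∈ R̄^{c_u}(ω)}. (Lemma 4.2.) -/

import Mathlib

/-- The event release transition of an S-builder. -/
def SRel {α : Type*} [DecidableEq α] {m : ℕ} (Ss : Fin m → Finset α)
    (τ : Fin m → List α) (σ : α) (τ' : Fin m → List α) : Prop :=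
  (∃ i, σ ∈ Ss i) ∧ ∀ i, (σ ∈ Ss i → τ i = σ :: τ' i) ∧ (σ ∉ Ss i → τ' i = τ i)

/-- The transition function `h̃_g` of an E_gTS-builder (conditions H1 and H2). -/
def HStep {α : Type*} [DecidableEq α] {m : ℕ} (Ss : Fin m → Finset α)
    (R : Option α → Option α → ℕ∞) (cu : ℕ)
    (s : (Fin m → List α) × ℕ) (p : Option α × Option α)
    (s' : (Fin m → List α) × ℕ) : Prop :=
  p ≠ (none, none) ∧ (∀ σ, p.1 = some σ → ∃ i, σ ∈ Ss i) ∧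
  ((p.2 = none ∧ s'.1 = s.1 ∧ ∃ k : ℕ, R p.1 none = k ∧ s'.2 = s.2 + k ∧ s'.2 ≤ cu) ∨
   (∃ σ, p.2 = some σ ∧ SRel Ss s.1 σ s'.1 ∧
     ∃ k : ℕ, R p.1 (some σ) = k ∧ s'.2 = s.2 + k ∧ s'.2 ≤ cu))

/-- Paths of the E_gTS-builder, labelled by strings of event pairs. -/
def HRun {α : Type*} [DecidableEq α] {m : ℕ} (Ss : Fin m → Finset α)
    (R : Option α → Option α → ℕ∞) (cu : ℕ) :
    (Fin m → List α) × ℕ → List (Option α × Option α) → (Fin m → List α) × ℕ → Prop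
  | s, [], s2 => s2 = s
  | s, p :: w, s2 => ∃ s1, HStep Ss R cu s p s1 ∧ HRun Ss R cu s1 w s2

/-- The error relation with cost (see paper, Section III). -/
inductive Err {α : Type*} (R : Option α → Option α → ℕ∞) : List α → List α → ℕ → Prop
  | nil : Err R [] [] 0
  | ins {w w' : List α} {c : ℕ} (σ : α) (k : ℕ) (hk : R none (some σ) = k) :
      Err R w w' c → Err R w (σ :: w') (k + c)
  | del {w w' : List α} {c : ℕ} (σ : α) (k : ℕ) (hk : R (some σ) none = k) :
      Err R w w' c → Err R (σ :: w) w' (k + c)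
  | rep {w w' : List α} {c : ℕ} (σ σ' : α) (k : ℕ) (hk : R (some σ) (some σ') = k) :
      Err R w w' c → Err R (σ :: w) (σ' :: w') (k + c)

/-- The natural projection `P_i : Σ* → Σ_i*` keeping symbols in `Σ_i` and erasing others. -/
def natProj {α : Type*} [DecidableEq α] (Si : Finset α) (s : List α) : List α :=
  s.filter (· ∈ Si)

/-- Lemma 4.2: the set `TO_g^{c_u}(τ_g)` of global-error-tolerant
TO-sequences with costs equals the set of pairs `(t^p[0], c)` obtained from marked
strings of the E_gTS-builder driving `(τ_g, 0)` to `(T_e, c)`. -/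
lemma natProj_cons {α : Type*} [DecidableEq α] (Si : Finset α) (σ : α) (s : List α) :
    natProj Si (σ :: s) = if σ ∈ Si then σ :: natProj Si s else natProj Si s := by
  simp [natProj, List.filter_cons]

lemma lemA {α : Type*} [DecidableEq α] {m : ℕ} (Ss : Fin m → Finset α)
    (R : Option α → Option α → ℕ∞) (cu : ℕ) :
    ∀ {ω ωr : List α} {c : ℕ}, Err R ω ωr c →
    (∀ a ∈ ω, ∃ i, a ∈ Ss i) → (∀ a ∈ ωr, ∃ i, a ∈ Ss i) →
    ∀ τ (c0 : ℕ), (∀ i, natProj (Ss i) ωr = τ i) → c0 + c ≤ cu →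
    ∃ w, HRun Ss R cu (τ, c0) w ((fun _ => ([] : List α)), c0 + c) ∧
      ω = w.filterMap Prod.fst := by
  intro ω ωr c herr
  induction herr with
  | nil =>
    intro _ _ τ c0 hproj hle
    refine ⟨[], ?_, rfl⟩
    show _ = _
    have : τ = fun _ => [] := funext fun i => (hproj i).symm
    simp [this]
  | ins σ k hk h ih =>
    intro hω hωr τ c0 hproj hle
    set τ' : Fin m → List α := fun i => natProj (Ss i) _ with hτ'
    obtain ⟨w, hrun, hfm⟩ := ih hω (fun a ha => hωr a (List.mem_cons_of_mem _ ha))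
      τ' (c0 + k) (fun i => rfl) (by omega)
    refine ⟨(none, some σ) :: w, ⟨(τ', c0 + k), ?_, ?_⟩, ?_⟩
    · refine ⟨by simp, by simp, Or.inr ⟨σ, rfl, ⟨hωr σ List.mem_cons_self, fun i => ⟨fun h1 => ?_, fun h1 => ?_⟩⟩, k, hk, rfl, by omega⟩⟩
      · show τ i = σ :: τ' i
        rw [← hproj i, natProj_cons, if_pos h1]
      · show τ' i = τ i
        rw [← hproj i, natProj_cons, if_neg h1]
    · rw [← Nat.add_assoc]; exact hrun
    · simpa using hfm
  | del σ k hk h ih =>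
    intro hω hωr τ c0 hproj hle
    obtain ⟨w, hrun, hfm⟩ := ih (fun a ha => hω a (List.mem_cons_of_mem _ ha)) hωr
      τ (c0 + k) hproj (by omega)
    refine ⟨(some σ, none) :: w, ⟨(τ, c0 + k), ?_, ?_⟩, ?_⟩
    · exact ⟨by simp, fun σ' hσ' => by
        simp at hσ'; exact hσ' ▸ hω σ List.mem_cons_self,
        Or.inl ⟨rfl, rfl, k, hk, rfl, by omega⟩⟩
    · rw [← Nat.add_assoc]; exact hrun
    · simpa using hfm
  | rep σ σ' k hk h ih =>
    intro hω hωr τ c0 hproj hle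
    set τ' : Fin m → List α := fun i => natProj (Ss i) _ with hτ'
    obtain ⟨w, hrun, hfm⟩ := ih (fun a ha => hω a (List.mem_cons_of_mem _ ha))
      (fun a ha => hωr a (List.mem_cons_of_mem _ ha)) τ' (c0 + k) (fun i => rfl) (by omega)
    refine ⟨(some σ, some σ') :: w, ⟨(τ', c0 + k), ?_, ?_⟩, ?_⟩
    · refine ⟨by simp, fun σ0 hσ0 => by
        simp at hσ0; exact hσ0 ▸ hω σ List.mem_cons_self,
        Or.inr ⟨σ', rfl, ⟨hωr σ' List.mem_cons_self, fun i => ⟨fun h1 => ?_, fun h1 => ?_⟩⟩, k, hk, rfl, by omega⟩⟩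
      · show τ i = σ' :: τ' i
        rw [← hproj i, natProj_cons, if_pos h1]
      · show τ' i = τ i
        rw [← hproj i, natProj_cons, if_neg h1]
    · rw [← Nat.add_assoc]; exact hrun
    · simpa using hfm

lemma lemB {α : Type*} [DecidableEq α] {m : ℕ} (Ss : Fin m → Finset α)
    (R : Option α → Option α → ℕ∞) (cu : ℕ) :
    ∀ (w : List (Option α × Option α)) (τ : Fin m → List α) (c0 c : ℕ), c0 ≤ cu →
    HRun Ss R cu (τ, c0) w ((fun _ => ([] : List α)), c) →
    ∃ ωr c', Err R (w.filterMap Prod.fst) ωr c' ∧ c = c0 + c' ∧ c ≤ cu ∧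
      (∀ a ∈ w.filterMap Prod.fst, ∃ i, a ∈ Ss i) ∧
      (∀ a ∈ ωr, ∃ i, a ∈ Ss i) ∧ ∀ i, natProj (Ss i) ωr = τ i := by
  intro w
  induction w with
  | nil =>
    intro τ c0 c hc0 hrun
    have h : ((fun _ => ([] : List α)), c) = (τ, c0) := hrun
    obtain ⟨h1, h2⟩ := Prod.mk.injEq .. ▸ h
    refine ⟨[], 0, Err.nil, by omega, by omega, by simp, by simp, fun i => ?_⟩
    rw [← h1]; rfl
  | cons p w ih =>
    intro τ c0 c hc0 hrun
    obtain ⟨⟨τ1, c1⟩, hstep, hrun'⟩ := hrun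
    obtain ⟨hne, hfst, hbr⟩ := hstep
    rcases hbr with ⟨hp2, hτ1, k, hk, hc1, hcu⟩ | ⟨σ, hp2, ⟨⟨i0, hi0⟩, hsrel⟩, k, hk, hc1, hcu⟩
    · -- deletion
      obtain ⟨σ, hp1⟩ : ∃ σ, p.1 = some σ := by
        rcases hq : p.1 with _ | σ
        · exact absurd (Prod.ext hq hp2) hne
        · exact ⟨σ, rfl⟩
      simp only at hτ1 hc1
      obtain ⟨ωr, c', herr, hceq, hcle, hmem, hmemr, hproj⟩ :=
        ih τ1 c1 c (hc1 ▸ hcu) hrun'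
      have hpc : p = (some σ, none) := Prod.ext hp1 hp2
      refine ⟨ωr, k + c', ?_, by omega, hcle, ?_, hmemr, fun i => hτ1 ▸ hproj i⟩
      · simp only [hpc, List.filterMap_cons]
        exact Err.del σ k (hp1 ▸ hk) herr
      · intro a ha
        rw [hpc] at ha; simp [List.filterMap_cons] at ha
        rcases ha with rfl | ha
        · exact hfst a hp1
        · exact hmem a (by simpa using ha)
    · -- release
      simp only at hc1
      obtain ⟨ωr, c', herr, hceq, hcle, hmem, hmemr, hproj⟩ :=
        ih τ1 c1 c (hc1 ▸ hcu) hrun'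
      have hprojσ : ∀ i, natProj (Ss i) (σ :: ωr) = τ i := by
        intro i
        rw [natProj_cons]
        by_cases h1 : σ ∈ Ss i
        · rw [if_pos h1, hproj i]; exact ((hsrel i).1 h1).symm
        · rw [if_neg h1, hproj i]; exact (hsrel i).2 h1
      rcases hq : p.1 with _ | σ0
      · have hpc : p = (none, some σ) := Prod.ext hq hp2
        refine ⟨σ :: ωr, k + c', ?_, by omega, hcle, ?_, ?_, hprojσ⟩
        · simp only [hpc, List.filterMap_cons]
          exact Err.ins σ k (hq ▸ hk) herr
        · intro a ha; rw [hpc] at ha; exact hmem a (by simpa using ha)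
        · intro a ha
          rcases List.mem_cons.1 ha with rfl | ha
          · exact ⟨i0, hi0⟩
          · exact hmemr a ha
      · have hpc : p = (some σ0, some σ) := Prod.ext hq hp2
        refine ⟨σ :: ωr, k + c', ?_, by omega, hcle, ?_, ?_, hprojσ⟩
        · simp only [hpc, List.filterMap_cons]
          exact Err.rep σ0 σ k (hq ▸ hk) herr
        · intro a ha
          rw [hpc] at ha; simp [List.filterMap_cons] at ha
          rcases ha with rfl | ha
          · exact hfst a hq
          · exact hmem a (by simpa using ha)
        · intro a ha
          rcases List.mem_cons.1 ha with rfl | ha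
          · exact ⟨i0, hi0⟩
          · exact hmemr a ha

theorem GETO_eq_marked {α : Type*} [DecidableEq α] {m : ℕ} (Ss : Fin m → Finset α)
    (R : Option α → Option α → ℕ∞) (cu : ℕ) (τg : Fin m → List α) :
    {p : List α × ℕ | (∀ a ∈ p.1, ∃ i, a ∈ Ss i) ∧ p.2 ≤ cu ∧
      ∃ ωr : List α, (∀ a ∈ ωr, ∃ i, a ∈ Ss i) ∧ (∀ i, natProj (Ss i) ωr = τg i) ∧
        Err R p.1 ωr p.2} =
    {p : List α × ℕ | ∃ w : List (Option α × Option α),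
      HRun Ss R cu (τg, 0) w ((fun _ => []), p.2) ∧ p.1 = w.filterMap Prod.fst} := by
  ext p
  simp only [Set.mem_setOf_eq]
  constructor
  · rintro ⟨hω, hc, ωr, hωr, hproj, herr⟩
    obtain ⟨w, hrun, hfm⟩ := lemA Ss R cu herr hω hωr τg 0 hproj (by omega)
    exact ⟨w, by simpa using hrun, hfm⟩
  · rintro ⟨w, hrun, hfm⟩
    obtain ⟨ωr, c', herr, hceq, hcle, hmem, hmemr, hproj⟩ :=
      lemB Ss R cu w τg 0 p.2 (Nat.zero_le _) hrun
    have : c' = p.2 := by omega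
    subst this
    exact ⟨hfm ▸ hmem, hcle, ωr, hmemr, hproj, hfm ▸ herr⟩
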